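/- Let G be a finite group with a subgroup M of index 2. If the number of involutions in G \ M is greater than 2|M|/3, then M is nilpotent. -/

import Mathlib

/-- `psi G` is the sum of the orders of the elements of `G`. -/
noncomputable def psi (G : Type*) [Group G] : ℕ := ∑ᶠ x : G, orderOf x

/-- `avgO G` is the average order of the elements of `G`. -/
noncomputable def avgO (G : Type*) [Group G] : ℚ := psi G / Nat.card G

open scoped commutatorElement

/-- Any subgroup of index at most 2 contains all commutators. -/
lemma commutator_mem_of_index_le_two {K : Type*} [Group K] (H : Subgroup K)
    (hpos : H.index ≠ 0) (hH : H.index ≤ 2) (a b : K) : ⁅a, b⁆ ∈ H := by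
  have h1 : H.index = 1 ∨ H.index = 2 := by omega
  rcases h1 with hidx | hidx
  · rw [Subgroup.index_eq_one] at hidx
    simp [hidx]
  · rw [commutatorElement_def]
    rw [Subgroup.mul_mem_iff_of_index_two hidx, Subgroup.mul_mem_iff_of_index_two hidx,
      Subgroup.mul_mem_iff_of_index_two hidx, inv_mem_iff, inv_mem_iff]
    tauto

theorem nilpotent_of_many_involutions_outside {G : Type*} [Group G] [Finite G]
    (M : Subgroup G) (hi : M.index = 2)
    (h : 2 * Nat.card M < 3 * Nat.card {x : G // x ∉ M ∧ orderOf x = 2}) :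
    Group.IsNilpotent M := by
  classical
  set K := ↥M
  have npos : 0 < Nat.card K := Nat.card_pos
  set n := Nat.card K with hn
  -- find an involution `t` outside `M`
  obtain ⟨t, htM, ht2⟩ : ∃ t : G, t ∉ M ∧ orderOf t = 2 := by
    have : 0 < Nat.card {x : G // x ∉ M ∧ orderOf x = 2} := by omega
    obtain ⟨⟨t, ht⟩⟩ := Nat.card_pos_iff.mp this
    exact ⟨t, ht⟩
  have htt : t * t = 1 := by
    have := pow_orderOf_eq_one t
    rwa [ht2, pow_two] at this
  -- the set of elements of `M` inverted by conjugation by `t`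
  set S : Set K := {m : K | t * (m : G) * t = (m : G)⁻¹} with hS
  -- `S` is big
  have hinj : Nat.card {x : G // x ∉ M ∧ orderOf x = 2} ≤ S.ncard := by
    rw [← Nat.card_coe_set_eq]
    apply Nat.card_le_card_of_injective
      (f := fun x : {x : G // x ∉ M ∧ orderOf x = 2} => (⟨⟨t * x.1, ?_⟩, ?_⟩ : S))
    · intro a b hab
      have h' := congrArg (fun z : S => ((z : K) : G)) hab
      simp only [mul_right_inj] at h'
      exact Subtype.ext h' 
    · rw [Subgroup.mul_mem_iff_of_index_two hi]
      simp [htM, x.2.1]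
    · obtain ⟨x, hxM, hx2⟩ := x
      have hxx : x * x = 1 := by
        have := pow_orderOf_eq_one x
        rwa [hx2, pow_two] at this
      simp only [hS, Set.mem_setOf_eq]
      have h1 : t * (t * x) * t = x * t := by
        rw [← mul_assoc t t x, htt, one_mul]
      rw [h1, mul_inv_rev, inv_eq_of_mul_eq_one_right hxx, inv_eq_of_mul_eq_one_right htt]
  have hSbig : 2 * n < 3 * S.ncard := lt_of_lt_of_le h (by omega)
  -- every element of `S` has centralizer of index at most 2 in `M`
  have hcent : ∀ x ∈ S, (Subgroup.centralizer {x}).index ≠ 0 ∧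
      (Subgroup.centralizer {x}).index ≤ 2 := by
    intro x hx
    set B : Set K := (fun y => x * y) ⁻¹' S with hB
    have hBcard : B.ncard = S.ncard := by
      have : B = (fun y => x⁻¹ * y) '' S := by
        ext y
        constructor
        · intro hy; exact ⟨x * y, hy, inv_mul_cancel_left x y⟩
        · rintro ⟨z, hz, rfl⟩; rw [hB, Set.mem_preimage, mul_inv_cancel_left]; exact hz
      rw [this, Set.ncard_image_of_injective _ (mul_right_injective x⁻¹)]
    have hIU := Set.ncard_inter_add_ncard_union S B
    have hU : (S ∪ B).ncard ≤ n := by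
      rw [hn, ← Set.ncard_univ]
      exact Set.ncard_le_ncard (Set.subset_univ _)
    have hsub : S ∩ B ⊆ (Subgroup.centralizer {x} : Subgroup K) := by
      rintro y ⟨hyS, hyB⟩
      rw [SetLike.mem_coe, Subgroup.mem_centralizer_singleton_iff]
      have hxy : t * ((x : G) * y) * t = ((x : G) * y)⁻¹ := by
        have := hyB
        simp only [hB, hS, Set.mem_setOf_eq, Set.mem_preimage, Subgroup.coe_mul] at this ⊢
        exact this
      have h1 : (x : G)⁻¹ * (y : G)⁻¹ = ((x : G) * y)⁻¹ := by
        rw [← hx, ← hyS, ← hxy]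
        calc (t * (x:G) * t) * (t * (y:G) * t)
            = t * (x:G) * (t * t) * ((y:G) * t) := by group
          _ = t * ((x:G) * (y:G)) * t := by rw [htt]; group
      have h2 : (y : G) * x = (x : G) * y := by
        have h3 := congrArg (·⁻¹) h1
        simpa [mul_inv_rev] using h3
      exact Subtype.ext h2
    have hle : (S ∩ B).ncard ≤ Nat.card (Subgroup.centralizer {x}) := by
      rw [← Nat.card_coe_set_eq, Nat.card_coe_set_eq]
      exact Set.ncard_le_ncard hsub
    have hix := Subgroup.index_mul_card (Subgroup.centralizer {x})
    rw [← hn] at hix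
    have h3 : 3 * Nat.card (Subgroup.centralizer {x}) > n := by omega
    constructor
    · intro h0; rw [h0] at hix; omega
    · by_contra hgt
      push_neg at hgt
      nlinarith [hix]
  -- `S` generates `M`
  have hclosure : Subgroup.closure S = ⊤ := by
    rw [← Subgroup.index_eq_one]
    have hle : S.ncard ≤ Nat.card (Subgroup.closure S) := by
      rw [← Nat.card_coe_set_eq, Nat.card_coe_set_eq]
      exact Set.ncard_le_ncard Subgroup.subset_closure
    have hix := Subgroup.index_mul_card (Subgroup.closure S)
    rw [← hn] at hix
    by_contra hne
    have : 2 ≤ (Subgroup.closure S).index ∨ (Subgroup.closure S).index = 0 := by omega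
    rcases this with hge | h0
    · nlinarith [hix]
    · rw [h0] at hix; omega
  -- every commutator is central
  have hcomm : ∀ a b : K, ⁅a, b⁆ ∈ Subgroup.center K := by
    intro a b
    rw [Subgroup.mem_center_iff]
    intro g
    have hg : g ∈ Subgroup.closure S := by rw [hclosure]; trivial
    induction hg using Subgroup.closure_induction with
    | mem x hx =>
        obtain ⟨h0, h2⟩ := hcent x hx
        have := commutator_mem_of_index_le_two _ h0 h2 a b
        exact (Subgroup.mem_centralizer_singleton_iff.mp this).symm
    | one => simp
    | mul x y hx hy ihx ihy => rw [mul_assoc, ihy, ← mul_assoc, ihx, mul_assoc]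
    | inv x hx ihx =>
        calc x⁻¹ * ⁅a,b⁆ = x⁻¹ * (⁅a,b⁆ * x) * x⁻¹ := by rw [mul_assoc, mul_inv_cancel_right]
          _ = x⁻¹ * (x * ⁅a,b⁆) * x⁻¹ := by rw [ihx]
          _ = ⁅a,b⁆ * x⁻¹ := by rw [inv_mul_cancel_left]
  -- conclude: `M ⧸ Z(M)` is abelian, hence `M` is nilpotent
  letI : CommGroup (K ⧸ Subgroup.center K) :=
    { (inferInstance : Group (K ⧸ Subgroup.center K)) with
      mul_comm := by
        intro a b
        induction a using QuotientGroup.induction_on with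
        | _ x =>
        induction b using QuotientGroup.induction_on with
        | _ y =>
        rw [← QuotientGroup.mk_mul, ← QuotientGroup.mk_mul, QuotientGroup.eq]
        have : (x * y)⁻¹ * (y * x) = ⁅y⁻¹, x⁻¹⁆ := by simp only [commutatorElement_def, inv_inv, mul_inv_rev, mul_assoc]; rw [inv_inv, inv_inv]
        rw [this]
        exact hcomm _ _ }
  exact isNilpotent_of_ker_le_center (QuotientGroup.mk' (Subgroup.center K))
    (by rw [QuotientGroup.ker_mk'])
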